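/- Let 2 ≤ k ≤ n−1, let a ∈ ℚ_pˣ and x₁,…,x_{k−1} ∈ ℚ_p, and let h = I + (a − 1)e_{k,k} + Σ_{i=1}^{k−1} x_i e_{k,i} ∈ GL(n,ℚ_p). Let Y = {u ∈ N_n : u_{j,l} = 0 whenever j < l ≤ k}, a closed subgroup of N_n isomorphic as a p-adic analytic group to a finite product of copies of (ℚ_p,+); equip Y with a Haar measure dy. Let W : GL(n,ℚ_p) → ℂ satisfy W(gj) = ψ_m(j)·W(g) for all j ∈ J_m and all g, and let g₀ ∈ GL(n,ℚ_p) be such that y ↦ W(g₀·h^{−1}·y·h)·ψ(y)^{−1} is integrable on Y. If ∫_Y W(g₀·h^{−1}·y·h)·ψ(y)^{−1} dy ≠ 0, then h ∈ J_m; that is, x_i ∈ p^{(1+2(k−i))m} ℤ_p for every 1 ≤ i ≤ k−1 and a ∈ 1 + p^m ℤ_p. -/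

import Mathlib

open Matrix MeasureTheory

noncomputable section

/-- The subgroup (as a set) of upper triangular unipotent matrices in `GL n`. -/
def NN (p n : ℕ) [Fact p.Prime] : Set (GL (Fin n) ℚ_[p]) :=
  {g | (∀ i, g.val i i = 1) ∧ ∀ i j : Fin n, j < i → g.val i j = 0}

/-- Lower triangular unipotent matrices in `GL n`. -/
def NNbar (p n : ℕ) [Fact p.Prime] : Set (GL (Fin n) ℚ_[p]) :=
  {g | (∀ i, g.val i i = 1) ∧ ∀ i j : Fin n, i < j → g.val i j = 0}

/-- Invertible diagonal matrices in `GL n`. -/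
def AA (p n : ℕ) [Fact p.Prime] : Set (GL (Fin n) ℚ_[p]) :=
  {g | ∀ i j : Fin n, i ≠ j → g.val i j = 0}

/-- Invertible lower triangular matrices in `GL n`. -/
def BBbar (p n : ℕ) [Fact p.Prime] : Set (GL (Fin n) ℚ_[p]) :=
  {g | ∀ i j : Fin n, i < j → g.val i j = 0}

/-- The congruence subgroup `K_n^m`: matrices `g` with all entries of `g - I` in `p^m ℤ_p`. -/
def Kcong (p n m : ℕ) [Fact p.Prime] : Set (GL (Fin n) ℚ_[p]) :=
  {g | ∀ i j : Fin n, ‖g.val i j - (1 : Matrix (Fin n) (Fin n) ℚ_[p]) i j‖ ≤ (p : ℝ) ^ (-(m : ℤ))}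

/-- The diagonal matrix `d = diag(1, p², p⁴, …, p^{2n-2})` as an element of `GL n`. -/
def dmat (p n : ℕ) [Fact p.Prime] : GL (Fin n) ℚ_[p] :=
  Matrix.GeneralLinearGroup.mkOfDetNeZero
    (Matrix.diagonal fun i : Fin n => (p : ℚ_[p]) ^ (2 * (i : ℕ)))
    (by
      rw [Matrix.det_diagonal]
      exact Finset.prod_ne_zero_iff.mpr fun i _ =>
        pow_ne_zero _ (Nat.cast_ne_zero.mpr (Fact.out : p.Prime).ne_zero))

/-- The compact open subgroup `J_m = d^m K_n^m d^{-m}`. -/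
def Jm (p n m : ℕ) [Fact p.Prime] : Set (GL (Fin n) ℚ_[p]) :=
  {g | ∃ k ∈ Kcong p n m, g = (dmat p n) ^ m * k * ((dmat p n) ^ m)⁻¹}

/-- The sum of the superdiagonal entries `Σ_{i=1}^{n-1} g_{i,i+1}` of a matrix. -/
def superSum {p : ℕ} [Fact p.Prime] {n : ℕ} (g : Matrix (Fin n) (Fin n) ℚ_[p]) : ℚ_[p] :=
  ∑ i : Fin n, if h : (i : ℕ) + 1 < n then g i ⟨(i : ℕ) + 1, h⟩ else 0

/-- The monoid homomorphism `A ↦ diag(A, 1)` from `n×n` matrices to `(n+1)×(n+1)` matrices. -/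
def embedHom (p n : ℕ) [Fact p.Prime] :
    Matrix (Fin n) (Fin n) ℚ_[p] →* Matrix (Fin (n + 1)) (Fin (n + 1)) ℚ_[p] where
  toFun A := (Matrix.reindexAlgEquiv ℚ_[p] ℚ_[p] finSumFinEquiv)
    (Matrix.fromBlocks A 0 0 (1 : Matrix (Fin 1) (Fin 1) ℚ_[p]))
  map_one' := by
    show (Matrix.reindexAlgEquiv ℚ_[p] ℚ_[p] finSumFinEquiv) _ = 1
    rw [Matrix.fromBlocks_one, _root_.map_one]
  map_mul' A B := by
    show (Matrix.reindexAlgEquiv ℚ_[p] ℚ_[p] finSumFinEquiv) _ =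
      (Matrix.reindexAlgEquiv ℚ_[p] ℚ_[p] finSumFinEquiv) _ *
        (Matrix.reindexAlgEquiv ℚ_[p] ℚ_[p] finSumFinEquiv) _
    rw [← _root_.map_mul]
    congr 1
    rw [Matrix.fromBlocks_multiply]
    simp

/-- The embedding `h ↦ diag(h, 1)` of `GL n` into `GL (n+1)`. -/
def embedGL {p n : ℕ} [Fact p.Prime] (g : GL (Fin n) ℚ_[p]) : GL (Fin (n + 1)) ℚ_[p] :=
  Units.map (embedHom p n) g


variable (p' : ℕ) [Fact p'.Prime]
instance : MeasurableSpace ℚ_[p'] := borel _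
instance : BorelSpace ℚ_[p'] := ⟨rfl⟩

/-- Coordinates for the group `Y = {u ∈ N_n : u_{j,l} = 0 for j < l ≤ k}` (one-based), i.e.
the positions `(j,l)` with `j < l` and `l ≥ k+1` (one-based), `k ≤ l` (zero-based). -/
def Yidx (n k : ℕ) : Type :=
  {q : Fin n × Fin n // q.1 < q.2 ∧ k ≤ (q.2 : ℕ)}

instance (n k : ℕ) : Fintype (Yidx n k) := by unfold Yidx; infer_instance

/-- The element of `Y` with free coordinates `v`. -/
def yMat (p : ℕ) [Fact p.Prime] {n k : ℕ} (v : Yidx n k → ℚ_[p]) :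
    Matrix (Fin n) (Fin n) ℚ_[p] :=
  1 + ∑ s : Yidx n k, Matrix.single s.val.1 s.val.2 (v s)


section Helpers
variable {p : ℕ} [Fact p.Prime] {n m : ℕ}

instance (n k : ℕ) : DecidableEq (Yidx n k) := by unfold Yidx; infer_instance


variable {p : ℕ} [Fact p.Prime]

lemma psi_ne_one_of_norm_eq_p (ψ : AddChar ℚ_[p] ℂ)
    (hψtriv : ∀ y : ℚ_[p], ‖y‖ ≤ 1 → ψ y = 1)
    (hψnontriv : ∃ y : ℚ_[p], ‖y‖ ≤ (p : ℝ) ∧ ψ y ≠ 1)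
    (z : ℚ_[p]) (hz : ‖z‖ = (p : ℝ)) : ψ z ≠ 1 := by
  have hp1 : (1:ℝ) < p := by exact_mod_cast (Fact.out : p.Prime).one_lt
  intro hz1
  obtain ⟨y, hy, hy1⟩ := hψnontriv
  -- w = y / z has norm ≤ 1
  have hzne : z ≠ 0 := by intro h; rw [h, norm_zero] at hz; linarith
  have hw : ‖y / z‖ ≤ 1 := by
    rw [norm_div, hz, div_le_one (by linarith)]; exact hy
  set w : ℤ_[p] := ⟨y / z, hw⟩ with hwdef
  -- integer approximation mod p
  obtain ⟨c, hc⟩ := Ideal.mem_span_singleton'.mp (PadicInt.appr_spec 1 w)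
  -- y = (appr) * z + (w - appr) * z
  have hy_eq : y = ((w.appr 1 : ℕ) : ℚ_[p]) * z + ((w : ℚ_[p]) - ((w.appr 1 : ℕ) : ℚ_[p])) * z := by
    have : (w : ℚ_[p]) = y / z := rfl
    rw [this]; field_simp; ring
  have hnorm2 : ‖((w : ℚ_[p]) - ((w.appr 1 : ℕ) : ℚ_[p])) * z‖ ≤ 1 := by
    have h1 : ‖(w : ℚ_[p]) - ((w.appr 1 : ℕ) : ℚ_[p])‖ ≤ (p:ℝ)⁻¹ := by
      have : w - ((w.appr 1 : ℕ) : ℤ_[p]) = c * (p:ℤ_[p])^1 := by rw [← hc]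
      have hn : ‖w - ((w.appr 1 : ℕ) : ℤ_[p])‖ ≤ (p:ℝ)⁻¹ := by
        rw [this]
        calc ‖c * (p:ℤ_[p])^1‖ ≤ ‖(p:ℤ_[p])^1‖ := by
              rw [norm_mul]; exact mul_le_of_le_one_left (norm_nonneg _) c.norm_le_one
          _ = (p:ℝ)⁻¹ := by rw [pow_one, PadicInt.norm_p]
      calc ‖(w : ℚ_[p]) - ((w.appr 1 : ℕ) : ℚ_[p])‖ = ‖((w - ((w.appr 1 : ℕ) : ℤ_[p]) : ℤ_[p]) : ℚ_[p])‖ := by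
            push_cast; ring_nf
        _ ≤ (p:ℝ)⁻¹ := by rw [PadicInt.padic_norm_e_of_padicInt]; exact hn
    calc ‖((w : ℚ_[p]) - ((w.appr 1 : ℕ) : ℚ_[p])) * z‖ ≤ (p:ℝ)⁻¹ * (p:ℝ) := by
          rw [norm_mul, hz]; exact mul_le_mul_of_nonneg_right h1 (by linarith)
      _ = 1 := by field_simp
  have : ψ y = 1 := by
    rw [hy_eq, ψ.map_add_eq_mul, hψtriv _ hnorm2, mul_one]
    have : (((w.appr 1 : ℕ) : ℚ_[p])) * z = (w.appr 1 : ℕ) • z := by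
      rw [nsmul_eq_mul]
    rw [this, AddChar.map_nsmul_eq_pow, hz1, one_pow]
  exact hy1 this

lemma norm_le_of_psi_eq_one (ψ : AddChar ℚ_[p] ℂ)
    (hψtriv : ∀ y : ℚ_[p], ‖y‖ ≤ 1 → ψ y = 1)
    (hψnontriv : ∃ y : ℚ_[p], ‖y‖ ≤ (p : ℝ) ∧ ψ y ≠ 1)
    (m : ℕ) (hm : 1 ≤ m) (c : ℚ_[p]) (E : ℤ)
    (h : ∀ t : ℚ_[p], ‖t‖ ≤ (p:ℝ)^E → ‖c * t‖ ≤ (p:ℝ)^(m:ℤ) → ψ (c * t) = 1) :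
    ‖c‖ ≤ (p:ℝ)^(-E) := by
  have hp1 : (1:ℝ) < p := by exact_mod_cast (Fact.out : p.Prime).one_lt
  rcases eq_or_ne c 0 with rfl | hc
  · rw [norm_zero]; positivity
  by_contra hgt
  push_neg at hgt
  rw [Padic.norm_eq_zpow_neg_valuation hc] at hgt
  have hvE : 1 + c.valuation ≤ E := by
    have := (zpow_lt_zpow_iff_right₀ hp1).mp hgt
    omega
  set t : ℚ_[p] := ((p : ℚ_[p]) * c)⁻¹ with ht
  have hpne : (p : ℚ_[p]) ≠ 0 := Nat.cast_ne_zero.mpr (Fact.out : p.Prime).ne_zero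
  have hct : c * t = (p : ℚ_[p])⁻¹ := by rw [ht]; field_simp
  have hctnorm : ‖c * t‖ = (p : ℝ) := by
    rw [hct, norm_inv, Padic.norm_p, inv_inv]
  have h1 : ‖t‖ ≤ (p:ℝ)^E := by
    rw [ht, norm_inv, norm_mul, Padic.norm_p, Padic.norm_eq_zpow_neg_valuation hc,
      ← zpow_neg_one (p:ℝ), ← zpow_add₀ (by linarith : (p:ℝ) ≠ 0), ← _root_.zpow_neg]
    exact zpow_le_zpow_right₀ (le_of_lt hp1) (by omega)
  have h2 : ‖c * t‖ ≤ (p:ℝ)^(m:ℤ) := by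
    rw [hctnorm]
    calc (p:ℝ) = (p:ℝ)^(1:ℤ) := (zpow_one _).symm
      _ ≤ (p:ℝ)^(m:ℤ) := zpow_le_zpow_right₀ (le_of_lt hp1) (by omega)
  exact psi_ne_one_of_norm_eq_p ψ hψtriv hψnontriv _ hctnorm (h t h1 h2)

lemma rowPerturb_mul (κ : Fin n) {ι : Type} [Fintype ι] (col : ι → Fin n)
    (hcol : ∀ i, col i ≠ κ) (b c : ℚ_[p]) (x y : ι → ℚ_[p]) :
    ((1 : Matrix (Fin n) (Fin n) ℚ_[p]) + Matrix.single κ κ b +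
        ∑ i, Matrix.single κ (col i) (x i)) *
      ((1 : Matrix (Fin n) (Fin n) ℚ_[p]) + Matrix.single κ κ c +
        ∑ i, Matrix.single κ (col i) (y i)) =
    1 + Matrix.single κ κ (b + c + b * c) +
      ∑ i, Matrix.single κ (col i) (x i + y i + b * y i) := by
  set B := Matrix.single κ κ b with hB
  set C := Matrix.single κ κ c with hC
  set X := ∑ i, Matrix.single κ (col i) (x i) with hX
  set Y := ∑ i, Matrix.single κ (col i) (y i) with hY
  have hBC : B * C = Matrix.single κ κ (b * c) :=
    Matrix.single_mul_single_same b κ κ κ c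
  have hBY : B * Y = ∑ i, Matrix.single κ (col i) (b * y i) := by
    rw [hB, hY, Finset.mul_sum]
    exact Finset.sum_congr rfl fun i _ => Matrix.single_mul_single_same b κ κ (col i) (y i)
  have hXC : X * C = 0 := by
    rw [hX, hC, Finset.sum_mul]
    exact Finset.sum_eq_zero fun i _ => Matrix.single_mul_single_of_ne (x i) κ (col i) _ (hcol i) c
  have hXY : X * Y = 0 := by
    rw [hX, hY, Finset.sum_mul]
    refine Finset.sum_eq_zero fun i _ => ?_
    rw [Finset.mul_sum]
    exact Finset.sum_eq_zero fun j _ =>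
      Matrix.single_mul_single_of_ne (x i) κ (col i) _ (hcol i) (y j)
  have key : (1 + B + X) * (1 + C + Y) = 1 + B + C + X + Y + B*C + B*Y + X*C + X*Y := by
    noncomm_ring
  rw [key, hBC, hBY, hXC, hXY, add_zero, add_zero]
  have h1 : Matrix.single κ κ (b + c + b * c) =
      B + C + Matrix.single κ κ (b * c) := by
    rw [hB, hC, ← Matrix.single_add, ← Matrix.single_add]
  have h2 : (∑ i, Matrix.single κ (col i) (x i + y i + b * y i)) =
      X + Y + ∑ i, Matrix.single κ (col i) (b * y i) := by
    rw [hX, hY, ← Finset.sum_add_distrib, ← Finset.sum_add_distrib]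
    exact Finset.sum_congr rfl fun i _ => by
      rw [← Matrix.single_add, ← Matrix.single_add]
  rw [h1, h2]
  abel

lemma sandwich (κ κ' : Fin n) {ι : Type} [Fintype ι] [DecidableEq ι] (col : ι → Fin n)
    (hcol : ∀ i, col i ≠ κ) (hinj : Function.Injective col)
    (hκκ' : κ ≠ κ')
    (b c : ℚ_[p]) (x y : ι → ℚ_[p]) (t : ℚ_[p]) (r0 : Fin n) (w : ℚ_[p])
    (hr0 : (r0 = κ ∧ w = c * t) ∨ (∃ i, r0 = col i ∧ w = y i * t)) :
    ((1 : Matrix (Fin n) (Fin n) ℚ_[p]) + Matrix.single κ κ c +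
        ∑ i, Matrix.single κ (col i) (y i)) *
      ((1 : Matrix (Fin n) (Fin n) ℚ_[p]) + Matrix.single r0 κ' t) *
      ((1 : Matrix (Fin n) (Fin n) ℚ_[p]) + Matrix.single κ κ b +
        ∑ i, Matrix.single κ (col i) (x i)) =
    ((1 : Matrix (Fin n) (Fin n) ℚ_[p]) + Matrix.single κ κ c +
        ∑ i, Matrix.single κ (col i) (y i)) *
      ((1 : Matrix (Fin n) (Fin n) ℚ_[p]) + Matrix.single κ κ b +
        ∑ i, Matrix.single κ (col i) (x i)) +
      Matrix.single r0 κ' t + Matrix.single κ κ' w := by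
  set G := (1 : Matrix (Fin n) (Fin n) ℚ_[p]) + Matrix.single κ κ c +
      ∑ i, Matrix.single κ (col i) (y i) with hG
  set H := (1 : Matrix (Fin n) (Fin n) ℚ_[p]) + Matrix.single κ κ b +
      ∑ i, Matrix.single κ (col i) (x i) with hH
  have hGE : G * Matrix.single r0 κ' t =
      Matrix.single r0 κ' t + Matrix.single κ κ' w := by
    rw [hG, add_mul, add_mul, one_mul]
    rcases hr0 with ⟨h1, h2⟩ | ⟨i, h1, h2⟩ <;> subst h2 <;> rw [h1]
    · rw [Matrix.single_mul_single_same]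
      have hz : (∑ i, Matrix.single κ (col i) (y i)) * Matrix.single κ κ' t = 0 := by
        rw [Finset.sum_mul]
        exact Finset.sum_eq_zero fun i _ =>
          Matrix.single_mul_single_of_ne (y i) κ (col i) _ (hcol i) t
      rw [hz, add_zero]
    · have hone : Matrix.single κ κ c * Matrix.single (col i) κ' t = 0 :=
        Matrix.single_mul_single_of_ne c κ κ _ (Ne.symm (hcol i)) t
      have h2 : (∑ j, Matrix.single κ (col j) (y j)) *
          Matrix.single (col i) κ' t = Matrix.single κ κ' (y i * t) := by
        rw [Finset.sum_mul, Finset.sum_eq_single i]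
        · exact Matrix.single_mul_single_same (y i) κ (col i) κ' t
        · intro j _ hji
          exact Matrix.single_mul_single_of_ne (y j) κ (col j) _ (fun hc => hji (hinj hc)) t
        · intro hi; exact absurd (Finset.mem_univ i) hi
      rw [hone, h2, add_zero]
  have hEH : (Matrix.single r0 κ' t + Matrix.single κ κ' w) * H =
      Matrix.single r0 κ' t + Matrix.single κ κ' w := by
    have z1 : Matrix.single r0 κ' t * Matrix.single κ κ b = 0 :=
      Matrix.single_mul_single_of_ne t r0 κ' _ (Ne.symm hκκ') b
    have z2 : Matrix.single κ κ' w * Matrix.single κ κ b = 0 :=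
      Matrix.single_mul_single_of_ne w κ κ' _ (Ne.symm hκκ') b
    have z3 : Matrix.single r0 κ' t * (∑ i, Matrix.single κ (col i) (x i)) = 0 := by
      rw [Finset.mul_sum]
      exact Finset.sum_eq_zero fun i _ =>
        Matrix.single_mul_single_of_ne t r0 κ' _ (Ne.symm hκκ') (x i)
    have z4 : Matrix.single κ κ' w * (∑ i, Matrix.single κ (col i) (x i)) = 0 := by
      rw [Finset.mul_sum]
      exact Finset.sum_eq_zero fun i _ =>
        Matrix.single_mul_single_of_ne w κ κ' _ (Ne.symm hκκ') (x i)
    have skel : (Matrix.single r0 κ' t + Matrix.single κ κ' w) * H =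
        (Matrix.single r0 κ' t + Matrix.single κ κ' w) +
        (Matrix.single r0 κ' t * Matrix.single κ κ b +
          Matrix.single κ κ' w * Matrix.single κ κ b +
          Matrix.single r0 κ' t * (∑ i, Matrix.single κ (col i) (x i)) +
          Matrix.single κ κ' w * (∑ i, Matrix.single κ (col i) (x i))) := by
      rw [hH]; noncomm_ring
    rw [skel, z1, z2, z3, z4]; abel
  have skel2 : G * (1 + Matrix.single r0 κ' t) * H =
      G * H + (G * Matrix.single r0 κ' t) * H := by noncomm_ring
  rw [skel2, hGE, hEH, ← add_assoc]

lemma ppos : (0:ℝ) < (p:ℝ) := by exact_mod_cast (Fact.out : p.Prime).pos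
lemma pone : (1:ℝ) < (p:ℝ) := by exact_mod_cast (Fact.out : p.Prime).one_lt

lemma dmat_val : (dmat p n).val = Matrix.diagonal fun i : Fin n => (p : ℚ_[p]) ^ (2 * (i : ℕ)) :=
  rfl

lemma dmat_pow_val : ((dmat p n) ^ m).val =
    Matrix.diagonal fun i : Fin n => (p : ℚ_[p]) ^ (2 * (i : ℕ) * m) := by
  rw [Units.val_pow_eq_pow_val, dmat_val, Matrix.diagonal_pow]
  have h2 : ((fun i : Fin n => (p : ℚ_[p]) ^ (2 * (i : ℕ))) ^ m) =
      fun i : Fin n => (p : ℚ_[p]) ^ (2 * (i : ℕ) * m) := by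
    funext i
    rw [Pi.pow_apply, ← pow_mul]
  rw [h2]

lemma dmat_pow_inv_val : (((dmat p n) ^ m)⁻¹).val =
    Matrix.diagonal fun i : Fin n => ((p : ℚ_[p]) ^ (2 * (i : ℕ) * m))⁻¹ := by
  have hpne : (p : ℚ_[p]) ≠ 0 := Nat.cast_ne_zero.mpr (Fact.out : p.Prime).ne_zero
  have h1 : (Matrix.diagonal fun i : Fin n => ((p : ℚ_[p]) ^ (2 * (i : ℕ) * m))⁻¹) *
      ((dmat p n) ^ m).val = 1 := by
    rw [dmat_pow_val, Matrix.diagonal_mul_diagonal]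
    have h2 : (fun i : Fin n => ((p : ℚ_[p]) ^ (2 * (i : ℕ) * m))⁻¹ * (p : ℚ_[p]) ^ (2 * (i : ℕ) * m))
        = fun _ => (1 : ℚ_[p]) := funext fun i => inv_mul_cancel₀ (pow_ne_zero _ hpne)
    rw [h2, Matrix.diagonal_one]
  calc (((dmat p n) ^ m)⁻¹).val
      = 1 * (((dmat p n) ^ m)⁻¹).val := (one_mul _).symm
    _ = (Matrix.diagonal fun i : Fin n => ((p : ℚ_[p]) ^ (2 * (i : ℕ) * m))⁻¹) *
        (((dmat p n) ^ m).val * (((dmat p n) ^ m)⁻¹).val) := by rw [← h1, mul_assoc]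
    _ = _ := by
        rw [← Units.val_mul, mul_inv_cancel, Units.val_one, mul_one]

lemma aux_le (x : ℝ) (hx : 0 ≤ x) (A C : ℤ) : x * (p:ℝ)^A ≤ (p:ℝ)^C ↔ x ≤ (p:ℝ)^(C-A) := by
  rw [zpow_sub₀ (ne_of_gt (ppos (p := p)))]
  rw [le_div_iff₀ (zpow_pos (ppos (p := p)) A)]

lemma norm_conj_entry (x : ℚ_[p]) (A B : ℕ) :
    ‖((p:ℚ_[p])^A)⁻¹ * x * (p:ℚ_[p])^B‖ = ‖x‖ * (p:ℝ)^((A:ℤ) - (B:ℤ)) := by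
  rw [norm_mul, norm_mul, norm_inv, Padic.norm_p_pow, Padic.norm_p_pow,
    ← _root_.zpow_neg, neg_neg, zpow_sub₀ (ne_of_gt (ppos (p := p)))]
  field_simp
  simp [_root_.zpow_neg, div_eq_mul_inv]

lemma mem_Jm_iff (g : GL (Fin n) ℚ_[p]) :
    g ∈ Jm p n m ↔ ∀ i j : Fin n,
      ‖g.val i j - (1 : Matrix (Fin n) (Fin n) ℚ_[p]) i j‖ ≤
        (p : ℝ) ^ (-(m : ℤ) + 2*(m:ℤ)*((j:ℤ) - (i:ℤ))) := by
  have hpne : (p : ℚ_[p]) ≠ 0 := Nat.cast_ne_zero.mpr (Fact.out : p.Prime).ne_zero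
  have hiff : g ∈ Jm p n m ↔ ((dmat p n) ^ m)⁻¹ * g * (dmat p n) ^ m ∈ Kcong p n m := by
    constructor
    · rintro ⟨kk, hkk, rfl⟩
      have heq : ((dmat p n) ^ m)⁻¹ * ((dmat p n) ^ m * kk * ((dmat p n) ^ m)⁻¹) * (dmat p n) ^ m
          = kk := by group
      rwa [heq]
    · intro h
      exact ⟨_, h, by group⟩
  have hval : ∀ i j : Fin n, (((dmat p n) ^ m)⁻¹ * g * (dmat p n) ^ m).val i j =
      ((p : ℚ_[p]) ^ (2 * (i : ℕ) * m))⁻¹ * g.val i j * (p : ℚ_[p]) ^ (2 * (j : ℕ) * m) := by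
    intro i j
    rw [Units.val_mul, Units.val_mul, dmat_pow_inv_val, dmat_pow_val]
    rw [Matrix.mul_diagonal, Matrix.diagonal_mul]
  have key : ∀ i j : Fin n, (((dmat p n) ^ m)⁻¹ * g * (dmat p n) ^ m).val i j -
      (1 : Matrix (Fin n) (Fin n) ℚ_[p]) i j =
      ((p : ℚ_[p]) ^ (2 * (i : ℕ) * m))⁻¹ *
        (g.val i j - (1 : Matrix (Fin n) (Fin n) ℚ_[p]) i j) * (p : ℚ_[p]) ^ (2 * (j : ℕ) * m) := by
    intro i j
    rw [hval]
    by_cases hij : i = j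
    · subst hij
      rw [Matrix.one_apply_eq]
      field_simp
    · rw [Matrix.one_apply_ne hij, sub_zero, sub_zero]
  rw [hiff]
  unfold Kcong
  rw [Set.mem_setOf_eq]
  apply forall_congr'
  intro i
  apply forall_congr'
  intro j
  rw [key i j, norm_conj_entry, aux_le _ (norm_nonneg _)]
  have hexp : (-(m:ℤ)) - (((2 * (i:ℕ) * m : ℕ) : ℤ) - ((2 * (j:ℕ) * m : ℕ) : ℤ)) =
      -(m : ℤ) + 2*(m:ℤ)*((j:ℤ) - (i:ℤ)) := by push_cast; ring
  rw [hexp]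

lemma two_entry_nilsq (r1 r2 c : Fin n) (hr1 : r1 ≠ c) (hr2 : r2 ≠ c) (u1 u2 : ℚ_[p]) :
    ((1 : Matrix (Fin n) (Fin n) ℚ_[p]) + Matrix.single r1 c u1 +
        Matrix.single r2 c u2) *
      ((1 : Matrix (Fin n) (Fin n) ℚ_[p]) - Matrix.single r1 c u1 -
        Matrix.single r2 c u2) = 1 ∧
    ((1 : Matrix (Fin n) (Fin n) ℚ_[p]) - Matrix.single r1 c u1 -
        Matrix.single r2 c u2) *
      ((1 : Matrix (Fin n) (Fin n) ℚ_[p]) + Matrix.single r1 c u1 +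
        Matrix.single r2 c u2) = 1 := by
  set N := Matrix.single r1 c u1 + Matrix.single r2 c u2 with hN
  have hNN : N * N = 0 := by
    rw [hN, add_mul, mul_add, mul_add]
    rw [Matrix.single_mul_single_of_ne u1 r1 c _ (Ne.symm hr1) u1,
      Matrix.single_mul_single_of_ne u1 r1 c _ (Ne.symm hr2) u2,
      Matrix.single_mul_single_of_ne u2 r2 c _ (Ne.symm hr1) u1,
      Matrix.single_mul_single_of_ne u2 r2 c _ (Ne.symm hr2) u2]
    simp
  constructor
  · have h1 : (1 + Matrix.single r1 c u1 + Matrix.single r2 c u2) *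
        (1 - Matrix.single r1 c u1 - Matrix.single r2 c u2) = 1 - N * N := by
      rw [hN]; noncomm_ring
    rw [h1, hNN, sub_zero]
  · have h1 : (1 - Matrix.single r1 c u1 - Matrix.single r2 c u2) *
        (1 + Matrix.single r1 c u1 + Matrix.single r2 c u2) = 1 - N * N := by
      rw [hN]; noncomm_ring
    rw [h1, hNN, sub_zero]

lemma stdBasis_norm_bound (r c i j : Fin n) (u : ℚ_[p]) (b : ℝ) (hb : 0 < b)
    (hu : r = i → c = j → ‖u‖ ≤ b) : ‖Matrix.single r c u i j‖ ≤ b := by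
  simp only [Matrix.single, Matrix.of_apply]
  split_ifs with h
  · exact hu h.1 h.2
  · rw [norm_zero]; exact le_of_lt hb

lemma two_entry_mem (r1 r2 c : Fin n) (u1 u2 : ℚ_[p]) (h1 : r1 < c) (h2 : r2 < c)
    (hb1 : ‖u1‖ ≤ (p:ℝ)^(-(m:ℤ) + 2*(m:ℤ)*((c:ℤ) - (r1:ℤ))))
    (hb2 : ‖u2‖ ≤ (p:ℝ)^(-(m:ℤ) + 2*(m:ℤ)*((c:ℤ) - (r2:ℤ)))) :
    (∀ i : Fin n, ((1 : Matrix (Fin n) (Fin n) ℚ_[p]) + Matrix.single r1 c u1 +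
        Matrix.single r2 c u2) i i = 1) ∧
    (∀ i j : Fin n, j < i → ((1 : Matrix (Fin n) (Fin n) ℚ_[p]) + Matrix.single r1 c u1 +
        Matrix.single r2 c u2) i j = 0) ∧
    (∀ i j : Fin n, ‖((1 : Matrix (Fin n) (Fin n) ℚ_[p]) + Matrix.single r1 c u1 +
        Matrix.single r2 c u2) i j - (1 : Matrix (Fin n) (Fin n) ℚ_[p]) i j‖ ≤
      (p : ℝ) ^ (-(m : ℤ) + 2*(m:ℤ)*((j:ℤ) - (i:ℤ)))) := by
  have hp1 : (1:ℝ) < (p:ℝ) := by exact_mod_cast (Fact.out : p.Prime).one_lt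
  have happ : ∀ (r : Fin n) (u : ℚ_[p]) (i j : Fin n), ¬(i = r ∧ j = c) →
      Matrix.single r c u i j = 0 := by
    intro r u i j h
    simp only [Matrix.single, Matrix.of_apply, ite_eq_right_iff, and_imp]
    intro hri hcj
    exact absurd ⟨hri.symm, hcj.symm⟩ h
  refine ⟨fun i => ?_, fun i j hji => ?_, fun i j => ?_⟩
  · rw [Matrix.add_apply, Matrix.add_apply,
      happ r1 u1 i i (fun hc => absurd (hc.1 ▸ hc.2 ▸ h1) (lt_irrefl _)),
      happ r2 u2 i i (fun hc => absurd (hc.1 ▸ hc.2 ▸ h2) (lt_irrefl _)),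
      add_zero, add_zero, Matrix.one_apply_eq]
  · rw [Matrix.add_apply, Matrix.add_apply,
      happ r1 u1 i j (fun hc => by rw [hc.1, hc.2] at hji; exact absurd h1 (not_lt.mpr (le_of_lt hji))),
      happ r2 u2 i j (fun hc => by rw [hc.1, hc.2] at hji; exact absurd h2 (not_lt.mpr (le_of_lt hji))),
      add_zero, add_zero, Matrix.one_apply_ne (Ne.symm (ne_of_lt hji))]
  · rw [Matrix.add_apply, Matrix.add_apply]
    have hsimp : (1 : Matrix (Fin n) (Fin n) ℚ_[p]) i j + Matrix.single r1 c u1 i j +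
        Matrix.single r2 c u2 i j - (1 : Matrix (Fin n) (Fin n) ℚ_[p]) i j =
        Matrix.single r1 c u1 i j + Matrix.single r2 c u2 i j := by ring
    rw [hsimp]
    refine le_trans (Padic.nonarchimedean _ _) (max_le ?_ ?_)
    · refine stdBasis_norm_bound r1 c i j u1 _ (zpow_pos (by linarith) _) ?_
      rintro rfl rfl
      exact hb1
    · refine stdBasis_norm_bound r2 c i j u2 _ (zpow_pos (by linarith) _) ?_
      rintro rfl rfl
      exact hb2

end Helpers

section YHelpers
variable {p : ℕ} [Fact p.Prime] {n k : ℕ}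

lemma yMat_apply_of_not (v : Yidx n k → ℚ_[p]) {i j : Fin n} (h : ¬(i < j ∧ k ≤ (j : ℕ))) :
    yMat p v i j = (1 : Matrix (Fin n) (Fin n) ℚ_[p]) i j := by
  unfold yMat
  rw [Matrix.add_apply]
  have hz : (∑ s : Yidx n k, Matrix.single s.val.1 s.val.2 (v s)) i j = 0 := by
    rw [Matrix.sum_apply]
    refine Finset.sum_eq_zero fun s _ => ?_
    simp only [Matrix.single, Matrix.of_apply, ite_eq_right_iff, and_imp]
    rintro rfl rfl
    exact absurd s.prop h
  rw [hz, add_zero]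

lemma yMat_det (v : Yidx n k → ℚ_[p]) : (yMat p v).det = 1 := by
  have ht : (yMat p v).BlockTriangular id := by
    intro i j hji
    rw [yMat_apply_of_not v (by simp only [not_and]; intro hij; exact absurd hij (not_lt.mpr (le_of_lt hji)))]
    exact Matrix.one_apply_ne (Ne.symm (ne_of_lt hji))
  rw [Matrix.det_of_upperTriangular ht]
  refine Finset.prod_eq_one fun i _ => ?_
  rw [yMat_apply_of_not v (by simp), Matrix.one_apply_eq]

lemma yMat_add_single (v : Yidx n k → ℚ_[p]) (s0 : Yidx n k) (t : ℚ_[p]) :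
    yMat p (v + (Pi.single s0 t : Yidx n k → ℚ_[p])) =
      yMat p v + Matrix.single s0.val.1 s0.val.2 t := by
  unfold yMat
  have : (∑ s : Yidx n k, Matrix.single s.val.1 s.val.2 ((v + (Pi.single s0 t : Yidx n k → ℚ_[p])) s)) =
      (∑ s : Yidx n k, Matrix.single s.val.1 s.val.2 (v s)) +
        Matrix.single s0.val.1 s0.val.2 t := by
    have h1 : ∀ s : Yidx n k, Matrix.single s.val.1 s.val.2 ((v + (Pi.single s0 t : Yidx n k → ℚ_[p])) s) =
        Matrix.single s.val.1 s.val.2 (v s) +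
          Matrix.single s.val.1 s.val.2 ((Pi.single s0 t : Yidx n k → ℚ_[p]) s) := fun s => by
      rw [Pi.add_apply, Matrix.single_add]
    rw [Finset.sum_congr rfl fun s _ => h1 s, Finset.sum_add_distrib]
    congr 1
    rw [Finset.sum_eq_single s0]
    · rw [Pi.single_eq_same]
    · intro s _ hs; rw [Pi.single_eq_of_ne hs, Matrix.single_zero]
    · intro h; exact absurd (Finset.mem_univ s0) h
  rw [this, add_assoc]

lemma yMat_mul_single (v : Yidx n k → ℚ_[p]) (s0 : Yidx n k) (hr0 : (s0.val.1 : ℕ) < k)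
    (t : ℚ_[p]) :
    yMat p v * (1 + Matrix.single s0.val.1 s0.val.2 t) =
      yMat p (v + (Pi.single s0 t : Yidx n k → ℚ_[p])) := by
  rw [yMat_add_single]
  unfold yMat
  rw [mul_add, mul_one, add_mul, one_mul]
  have hz : (∑ s : Yidx n k, Matrix.single s.val.1 s.val.2 (v s)) *
      Matrix.single s0.val.1 s0.val.2 t = 0 := by
    rw [Finset.sum_mul]
    refine Finset.sum_eq_zero fun s _ => ?_
    refine Matrix.single_mul_single_of_ne _ _ _ _ ?_ t
    intro hc
    have := s.prop.2
    rw [hc] at this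
    omega
  rw [hz, add_zero, add_assoc]

lemma superSum_add (A B : Matrix (Fin n) (Fin n) ℚ_[p]) :
    superSum (A + B) = superSum A + superSum B := by
  unfold superSum
  rw [← Finset.sum_add_distrib]
  refine Finset.sum_congr rfl fun i _ => ?_
  by_cases h : (i : ℕ) + 1 < n <;> simp [h, Matrix.add_apply]

lemma superSum_one : superSum (1 : Matrix (Fin n) (Fin n) ℚ_[p]) = 0 := by
  unfold superSum
  refine Finset.sum_eq_zero fun i _ => ?_
  by_cases h : (i : ℕ) + 1 < n
  · rw [dif_pos h]
    exact Matrix.one_apply_ne (by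
      intro hc; have := congrArg Fin.val hc; simp at this)
  · rw [dif_neg h]

lemma superSum_stdBasis (r c : Fin n) (t : ℚ_[p]) :
    superSum (Matrix.single r c t) = if (c : ℕ) = (r : ℕ) + 1 then t else 0 := by
  unfold superSum
  rw [Finset.sum_eq_single r]
  · by_cases h : (r : ℕ) + 1 < n
    · simp only [h, dif_pos]
      by_cases hc : (c : ℕ) = (r : ℕ) + 1
      · have : c = ⟨(r : ℕ) + 1, h⟩ := by ext; exact hc
        rw [if_pos hc, this]
        simp [Matrix.single]
      · rw [if_neg hc]
        simp only [Matrix.single, Matrix.of_apply, ite_eq_right_iff, and_imp]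
        intro _ hcc
        exact absurd (by rw [hcc]) hc
    · have hc : ¬ (c : ℕ) = (r : ℕ) + 1 := by
        intro hcc; exact h (hcc ▸ c.isLt)
      rw [dif_neg h, if_neg hc]
  · intro i _ hir
    by_cases h : (i : ℕ) + 1 < n
    · simp only [h, dif_pos]
      simp only [Matrix.single, Matrix.of_apply, ite_eq_right_iff, and_imp]
      intro hri _
      exact absurd (Eq.symm hri) hir
    · rw [dif_neg h]
  · intro h; exact absurd (Finset.mem_univ r) h

end YHelpers

/-- If `W` transforms on the right under `(J_m, ψ_m)` and, for
`h = I + (a-1)e_{k,k} + Σ_{i=1}^{k-1} x_i e_{k,i}` (one-based indices, `a ≠ 0`), the integral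
`∫_Y W(g₀ h⁻¹ y h) ψ(y)⁻¹ dy` (over the group `Y` in coordinates, with product Haar measure)
converges and is nonzero, then `h ∈ J_m`: `x_i ∈ p^{(1+2(k-i))m} ℤ_p` for all `i` and
`a ∈ 1 + p^m ℤ_p`. -/
theorem statement10 (p n k m : ℕ) [Fact p.Prime] (hn : 2 ≤ n)
    (hk1 : 2 ≤ k) (hk2 : k ≤ n - 1) (hm : 1 ≤ m)
    (a : ℚ_[p]) (ha : a ≠ 0) (x : Fin (k - 1) → ℚ_[p])
    (ψ : AddChar ℚ_[p] ℂ)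
    (hψtriv : ∀ y : ℚ_[p], ‖y‖ ≤ 1 → ψ y = 1)
    (hψnontriv : ∃ y : ℚ_[p], ‖y‖ ≤ (p : ℝ) ∧ ψ y ≠ 1)
    (μ : MeasureTheory.Measure ℚ_[p]) [μ.IsAddHaarMeasure]
    (W : Matrix (Fin n) (Fin n) ℚ_[p] → ℂ)
    (hW : ∀ g : GL (Fin n) ℚ_[p],
      ∀ b ∈ BBbar p n ∩ Jm p n m, ∀ u ∈ NN p n ∩ Jm p n m,
        W (g.val * (b * u).val) = ψ (superSum u.val) * W g.val)
    (g₀ : GL (Fin n) ℚ_[p]) :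
    letI hMat : Matrix (Fin n) (Fin n) ℚ_[p] :=
      1 + Matrix.single ⟨k - 1, by omega⟩ ⟨k - 1, by omega⟩ (a - 1) +
        ∑ i : Fin (k - 1),
          Matrix.single ⟨k - 1, by omega⟩ (Fin.castLE (by omega) i) (x i)
    MeasureTheory.Integrable
      (fun v : Yidx n k → ℚ_[p] =>
        W (g₀.val * hMat⁻¹ * yMat p v * hMat) * (ψ (superSum (yMat p v)))⁻¹)
      (MeasureTheory.Measure.pi fun _ => μ) →
    (∫ v : Yidx n k → ℚ_[p],
        W (g₀.val * hMat⁻¹ * yMat p v * hMat) * (ψ (superSum (yMat p v)))⁻¹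
        ∂(MeasureTheory.Measure.pi fun _ => μ)) ≠ 0 →
    (∀ i : Fin (k - 1),
        ‖x i‖ ≤ (p : ℝ) ^ (-((1 + 2 * ((k : ℤ) - ((i : ℕ) + 1))) * (m : ℤ)))) ∧
      ‖a - 1‖ ≤ (p : ℝ) ^ (-(m : ℤ)) ∧
      ∃ hGL ∈ Jm p n m, hGL.val = hMat := by
  intro hInt hne
  have hp := (Fact.out : p.Prime)
  have hp1 : (1:ℝ) < (p:ℝ) := by exact_mod_cast hp.one_lt
  have hppos : (0:ℝ) < (p:ℝ) := by linarith
  have hkn : k < n := by omega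
  have hk1n : k - 1 < n := by omega
  set κ : Fin n := ⟨k-1, hk1n⟩ with hκdef
  set κ' : Fin n := ⟨k, hkn⟩ with hκ'def
  have hκval : ((κ : Fin n) : ℕ) = k - 1 := by rw [hκdef]
  have hκ'val : ((κ' : Fin n) : ℕ) = k := by rw [hκ'def]
  have hκZ : ((κ : Fin n) : ℤ) = (k:ℤ) - 1 := by omega
  have hκ'Z : ((κ' : Fin n) : ℤ) = (k:ℤ) := by omega
  set col : Fin (k-1) → Fin n := fun i => Fin.castLE (by omega) i with hcoldef
  have hcolval : ∀ i : Fin (k-1), ((col i : Fin n) : ℕ) = (i : ℕ) := fun i => rfl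
  have hcol : ∀ i, col i ≠ κ := by
    intro i hc
    have h1 : ((col i : Fin n) : ℕ) = ((κ : Fin n) : ℕ) := congrArg Fin.val hc
    rw [hcolval, hκval] at h1
    have h2 : (i : ℕ) < k - 1 := i.isLt
    omega
  have hinj : Function.Injective col := fun i j hij => by
    have h1 := congrArg Fin.val hij
    rw [hcolval, hcolval] at h1
    exact Fin.ext h1
  have hκκ' : κ ≠ κ' := by
    intro hc
    have h1 : ((κ : Fin n) : ℕ) = ((κ' : Fin n) : ℕ) := congrArg Fin.val hc
    rw [hκval, hκ'val] at h1
    omega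
  set hMat : Matrix (Fin n) (Fin n) ℚ_[p] := 1 + Matrix.single κ κ (a-1) +
      ∑ i, Matrix.single κ (col i) (x i) with hMat_eq
  set gMat : Matrix (Fin n) (Fin n) ℚ_[p] := 1 + Matrix.single κ κ (a⁻¹-1) +
      ∑ i, Matrix.single κ (col i) (-(a⁻¹ * x i)) with hgMat
  have hHG : hMat * gMat = 1 := by
    rw [hMat_eq, hgMat, rowPerturb_mul κ col hcol (a-1) (a⁻¹-1) x (fun i => -(a⁻¹ * x i))]
    have e1 : (a-1) + (a⁻¹-1) + (a-1)*(a⁻¹-1) = 0 := by field_simp; ring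
    have hsum : (∑ i, Matrix.single κ (col i)
        (x i + (fun i => -(a⁻¹ * x i)) i + (a-1) * (fun i => -(a⁻¹ * x i)) i)) = 0 := by
      refine Finset.sum_eq_zero fun i _ => ?_
      have e2 : x i + (fun i => -(a⁻¹ * x i)) i + (a-1) * (fun i => -(a⁻¹ * x i)) i = 0 := by
        simp only []
        field_simp
        try ring
      rw [e2, Matrix.single_zero]
    rw [e1, hsum, Matrix.single_zero, add_zero, add_zero]
  have hGH : gMat * hMat = 1 := by
    rw [hMat_eq, hgMat, rowPerturb_mul κ col hcol (a⁻¹-1) (a-1) (fun i => -(a⁻¹ * x i)) x]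
    have e1 : (a⁻¹-1) + (a-1) + (a⁻¹-1)*(a-1) = 0 := by field_simp; ring
    have hsum : (∑ i, Matrix.single κ (col i)
        ((fun i => -(a⁻¹ * x i)) i + x i + (a⁻¹-1) * x i)) = 0 := by
      refine Finset.sum_eq_zero fun i _ => ?_
      have e2 : (fun i => -(a⁻¹ * x i)) i + x i + (a⁻¹-1) * x i = 0 := by
        simp only []
        field_simp
        try ring
      rw [e2, Matrix.single_zero]
    rw [e1, hsum, Matrix.single_zero, add_zero, add_zero]
  have hMatinv : hMat⁻¹ = gMat := Matrix.inv_eq_right_inv hHG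
  set hGL : GL (Fin n) ℚ_[p] := ⟨hMat, gMat, hHG, hGH⟩ with hGLdef
  have h1mem : (1 : GL (Fin n) ℚ_[p]) ∈ BBbar p n ∩ Jm p n m := by
    constructor
    · intro i j hij
      rw [Units.val_one]
      exact Matrix.one_apply_ne (ne_of_lt hij)
    · rw [mem_Jm_iff]
      intro i j
      rw [Units.val_one, sub_self, norm_zero]
      positivity
  have hψ0 : ∀ w : ℚ_[p], ψ w ≠ 0 := by
    intro w h0
    have h1 : ψ (w + (-w)) = ψ w * ψ (-w) := ψ.map_add_eq_mul w (-w)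
    rw [add_neg_cancel, AddChar.map_zero_eq_one, h0, zero_mul] at h1
    exact one_ne_zero h1
  set μpi := (MeasureTheory.Measure.pi fun _ : Yidx n k => μ) with hμpi
  set F : (Yidx n k → ℚ_[p]) → ℂ := fun v =>
      W (g₀.val * hMat⁻¹ * yMat p v * hMat) * (ψ (superSum (yMat p v)))⁻¹ with hF
  have hne' : (∫ v, F v ∂μpi) ≠ 0 := hne
  -- THE ENGINE
  have engine : ∀ (r0 : Fin n), (r0:ℕ) < k → ∀ (t z : ℚ_[p]),
      ((r0 = κ ∧ z = (a⁻¹ - 1) * t) ∨ (∃ i, r0 = col i ∧ z = (-(a⁻¹ * x i)) * t)) →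
      ‖t‖ ≤ (p:ℝ)^(-(m:ℤ) + 2*(m:ℤ)*((κ':ℤ) - (r0:ℤ))) →
      ‖z‖ ≤ (p:ℝ)^(-(m:ℤ) + 2*(m:ℤ)*((κ':ℤ) - (κ:ℤ))) →
      ψ z = 1 := by
    intro r0 hr0k t z hzform hbt hbz
    have hr0κ' : r0 < κ' := by
      rw [Fin.lt_def, hκ'val]
      exact hr0k
    have hκltκ' : κ < κ' := by
      rw [Fin.lt_def, hκval, hκ'val]
      omega
    set C : Matrix (Fin n) (Fin n) ℚ_[p] :=
      1 + Matrix.single r0 κ' t + Matrix.single κ κ' z with hCdef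
    have hr0κ'ne : r0 ≠ κ' := ne_of_lt hr0κ'
    have hCU := two_entry_nilsq r0 κ κ' hr0κ'ne hκκ' t z
    set CGL : GL (Fin n) ℚ_[p] :=
      ⟨C, 1 - Matrix.single r0 κ' t - Matrix.single κ κ' z, hCU.1, hCU.2⟩
      with hCGLdef
    have hCval : CGL.val = C := rfl
    have hCme := two_entry_mem (m := m) r0 κ κ' t z hr0κ' hκltκ' hbt hbz
    have hCNN : CGL ∈ NN p n := ⟨hCme.1, hCme.2.1⟩
    have hCJm : CGL ∈ Jm p n m := (mem_Jm_iff CGL).mpr hCme.2.2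
    have hCform : gMat * ((1 : Matrix (Fin n) (Fin n) ℚ_[p]) +
        Matrix.single r0 κ' t) * hMat = C := by
      rw [hgMat, hMat_eq]
      rw [sandwich κ κ' col hcol hinj hκκ' (a-1) (a⁻¹-1) x (fun i => -(a⁻¹ * x i)) t r0 z hzform]
      have hGH' : ((1 : Matrix (Fin n) (Fin n) ℚ_[p]) + Matrix.single κ κ (a⁻¹-1) +
          ∑ i, Matrix.single κ (col i) (-(a⁻¹ * x i))) *
          ((1 : Matrix (Fin n) (Fin n) ℚ_[p]) + Matrix.single κ κ (a-1) +
          ∑ i, Matrix.single κ (col i) (x i)) = 1 := by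
        rw [← hgMat, ← hMat_eq]
        exact hGH
      rw [hGH', hCdef]
    have hshiftite : (if ((κ' : Fin n) : ℕ) = (r0:ℕ) + 1 then t else 0) =
        (if r0 = κ then t else 0) := by
      by_cases hr : r0 = κ
      · rw [if_pos hr, if_pos]
        rw [hr, hκ'val, hκval]
        omega
      · rw [if_neg hr, if_neg]
        intro hc
        apply hr
        apply Fin.ext
        rw [hκ'val] at hc
        rw [hκval]
        omega
    have hsupCval : ((κ' : Fin n) : ℕ) = ((κ : Fin n) : ℕ) + 1 := by
      rw [hκval, hκ'val]
      omega
    have hsupC : superSum C = z + (if r0 = κ then t else 0) := by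
      rw [hCdef, superSum_add, superSum_add, superSum_one, superSum_stdBasis, superSum_stdBasis,
        hshiftite, if_pos hsupCval]
      ring
    set s0 : Yidx n k := ⟨(r0, κ'), hr0κ', le_of_eq rfl⟩ with hs0def
    have hkey : ∀ v : Yidx n k → ℚ_[p],
        F (v + (Pi.single s0 t : Yidx n k → ℚ_[p])) = ψ z * F v := by
      intro v
      have hymul := yMat_mul_single (p := p) v s0 hr0k t
      have hGident : g₀.val * hMat⁻¹ * yMat p (v + (Pi.single s0 t : Yidx n k → ℚ_[p])) * hMat =
          (g₀.val * gMat * yMat p v * hMat) * C := by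
        rw [hMatinv, ← hymul, ← hCform]
        have hskel : (g₀.val * gMat * yMat p v * hMat) *
            (gMat * ((1 : Matrix (Fin n) (Fin n) ℚ_[p]) + Matrix.single r0 κ' t) * hMat) =
            g₀.val * gMat * (yMat p v * ((hMat * gMat) *
              (((1 : Matrix (Fin n) (Fin n) ℚ_[p]) + Matrix.single r0 κ' t) * hMat))) := by
          noncomm_ring
        rw [hskel, hHG, one_mul]
        noncomm_ring
      set GGL : GL (Fin n) ℚ_[p] := g₀ * hGL⁻¹ * (Matrix.GeneralLinearGroup.mkOfDetNeZero
        (yMat p v) (by rw [yMat_det]; exact one_ne_zero)) * hGL with hGGLdef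
      have hGGLval : GGL.val = g₀.val * gMat * yMat p v * hMat := rfl
      have hWeq := hW GGL 1 h1mem CGL ⟨hCNN, hCJm⟩
      rw [one_mul] at hWeq
      have hσ : superSum (yMat p (v + (Pi.single s0 t : Yidx n k → ℚ_[p]))) =
          superSum (yMat p v) + (if r0 = κ then t else 0) := by
        rw [yMat_add_single, superSum_add, superSum_stdBasis, hshiftite]
      rw [hF]
      simp only []
      rw [hGident, hσ, hMatinv, ← hGGLval, ← hCval, hWeq, hCval, hsupC]
      rw [ψ.map_add_eq_mul, ψ.map_add_eq_mul]
      have h1 := hψ0 (superSum (yMat p v))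
      have h2 := hψ0 (if r0 = κ then t else 0)
      field_simp
    have hInt1 : ∫ v, F (v + (Pi.single s0 t : Yidx n k → ℚ_[p])) ∂μpi = ∫ v, F v ∂μpi :=
      integral_add_right_eq_self F (Pi.single s0 t)
    have hInt2 : ∫ v, F (v + (Pi.single s0 t : Yidx n k → ℚ_[p])) ∂μpi =
        ψ z * ∫ v, F v ∂μpi := by
      calc ∫ v, F (v + (Pi.single s0 t : Yidx n k → ℚ_[p])) ∂μpi
          = ∫ v, ψ z * F v ∂μpi := by simp only [hkey]
        _ = ψ z * ∫ v, F v ∂μpi := integral_const_mul _ _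
    have hfin : ψ z * ∫ v, F v ∂μpi = 1 * ∫ v, F v ∂μpi := by
      rw [← hInt2, hInt1, one_mul]
    exact mul_right_cancel₀ hne' hfin
  -- PART (a)
  have hEκ : -(m:ℤ) + 2*(m:ℤ)*((κ':ℤ) - (κ:ℤ)) = (m:ℤ) := by
    rw [hκZ, hκ'Z]; ring
  have ha1 : ‖a⁻¹ - 1‖ ≤ (p:ℝ)^(-(m:ℤ)) := by
    have := norm_le_of_psi_eq_one ψ hψtriv hψnontriv m hm (a⁻¹ - 1) (m:ℤ) ?_
    · rwa [] at this
    intro t ht hct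
    apply engine κ (by rw [hκval]; omega) t ((a⁻¹-1)*t) (Or.inl ⟨rfl, rfl⟩)
    · rw [hEκ]
      exact ht
    · rw [hEκ]
      exact hct
  have hpm1 : (p:ℝ)^(-(m:ℤ)) < 1 := by
    have h1 : (p:ℝ)^(-(m:ℤ)) < (p:ℝ)^(0:ℤ) := by
      apply zpow_lt_zpow_right₀ hp1
      omega
    rwa [zpow_zero] at h1
  have hainv1 : ‖a⁻¹ - 1‖ < 1 := lt_of_le_of_lt ha1 hpm1
  have hainvnorm : ‖a⁻¹‖ = 1 := by
    have h2 : ‖a⁻¹ - 1‖ ≠ ‖(1:ℚ_[p])‖ := by rw [norm_one]; exact ne_of_lt hainv1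
    have h3 : a⁻¹ = (a⁻¹ - 1) + 1 := by ring
    rw [h3, Padic.add_eq_max_of_ne h2, norm_one]
    exact max_eq_right (le_of_lt hainv1)
  have hanorm : ‖a‖ = 1 := by
    have h4 : ‖a⁻¹‖ = ‖a‖⁻¹ := norm_inv a
    rw [h4] at hainvnorm
    rw [← inv_inv ‖a‖, hainvnorm, inv_one]
  have haminus : ‖a - 1‖ ≤ (p:ℝ)^(-(m:ℤ)) := by
    have hrw : a - 1 = -(a * (a⁻¹ - 1)) := by field_simp; ring
    rw [hrw, norm_neg, norm_mul, hanorm, one_mul]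
    exact ha1
  -- PART (x i)
  have hxb : ∀ i : Fin (k-1),
      ‖x i‖ ≤ (p:ℝ)^(-(-(m:ℤ) + 2*(m:ℤ)*((k:ℤ) - ((i:ℕ):ℤ)))) := by
    intro i
    have hcolZ : ((col i : Fin n) : ℤ) = ((i:ℕ):ℤ) := by
      rw [hcoldef]
      norm_num
    have hcolk : ((col i : Fin n) : ℕ) < k := by
      rw [hcolval]
      have := i.isLt
      omega
    have hx1 : ‖-(a⁻¹ * x i)‖ ≤ (p:ℝ)^(-(-(m:ℤ) + 2*(m:ℤ)*((k:ℤ) - ((i:ℕ):ℤ)))) := by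
      apply norm_le_of_psi_eq_one ψ hψtriv hψnontriv m hm (-(a⁻¹ * x i))
        (-(m:ℤ) + 2*(m:ℤ)*((k:ℤ) - ((i:ℕ):ℤ)))
      intro t ht hct
      apply engine (col i) hcolk t ((-(a⁻¹ * x i)) * t) (Or.inr ⟨i, rfl, rfl⟩)
      · rw [show -(m:ℤ) + 2*(m:ℤ)*((κ':ℤ) - ((col i : Fin n):ℤ)) =
          -(m:ℤ) + 2*(m:ℤ)*((k:ℤ) - ((i:ℕ):ℤ)) by rw [hκ'Z, hcolZ]]
        exact ht
      · rw [hEκ]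
        exact hct
    have h5 : ‖x i‖ = ‖-(a⁻¹ * x i)‖ := by
      rw [norm_neg, norm_mul, hainvnorm, one_mul]
    rw [h5]
    exact hx1
  refine ⟨?_, haminus, ⟨hGL, ?_, rfl⟩⟩
  · intro i
    have := hxb i
    have hexp : (-(-(m:ℤ) + 2*(m:ℤ)*((k:ℤ) - ((i:ℕ):ℤ)))) =
        (-((1 + 2 * ((k : ℤ) - ((i : ℕ) + 1))) * (m : ℤ))) := by ring
    rwa [hexp] at this
  · -- hGL ∈ Jm
    rw [mem_Jm_iff]
    intro i j
    have hval : hGL.val = hMat := rfl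
    rw [hval, hMat_eq, Matrix.add_apply, Matrix.add_apply]
    have hsimp : (1 : Matrix (Fin n) (Fin n) ℚ_[p]) i j + Matrix.single κ κ (a-1) i j +
        (∑ l, Matrix.single κ (col l) (x l)) i j -
        (1 : Matrix (Fin n) (Fin n) ℚ_[p]) i j =
        Matrix.single κ κ (a-1) i j +
          (∑ l, Matrix.single κ (col l) (x l)) i j := by ring
    rw [hsimp]
    refine le_trans (Padic.nonarchimedean _ _) (max_le ?_ ?_)
    · refine stdBasis_norm_bound κ κ i j (a-1) _ (zpow_pos hppos _) ?_
      rintro rfl rfl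
      rw [show -(m:ℤ) + 2*(m:ℤ)*((κ:ℤ) - (κ:ℤ)) = -(m:ℤ) by ring]
      exact haminus
    · rw [Matrix.sum_apply]
      by_cases hiκ : i = κ
      · by_cases hjk : (j:ℕ) < k-1
        · have hcolj : col ⟨(j:ℕ), hjk⟩ = j := by
            apply Fin.ext
            rw [hcolval]
          have hsum : (∑ l, Matrix.single κ (col l) (x l) i j) = x ⟨(j:ℕ), hjk⟩ := by
            rw [Finset.sum_eq_single (⟨(j:ℕ), hjk⟩ : Fin (k-1))]
            · rw [hiκ, hcolj]
              simp [Matrix.single]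
            · intro l _ hl
              simp only [Matrix.single, Matrix.of_apply, ite_eq_right_iff, and_imp]
              intro _ hcl
              exfalso
              apply hl
              apply Fin.ext
              have : ((col l : Fin n) : ℕ) = (j : ℕ) := by rw [hcl]
              rw [hcolval] at this
              simp [this]
            · intro hmem
              exact absurd (Finset.mem_univ _) hmem
          rw [hsum]
          have hx2 := hxb ⟨(j:ℕ), hjk⟩
          have hexp2 : -(-(m:ℤ) + 2*(m:ℤ)*((k:ℤ) - (((⟨(j:ℕ), hjk⟩ : Fin (k-1)):ℕ):ℤ))) =
              -(m:ℤ) + 2*(m:ℤ)*((j:ℤ) - (i:ℤ)) := by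
            have hj1 : (((⟨(j:ℕ), hjk⟩ : Fin (k-1)):ℕ):ℤ) = (j:ℤ) := by norm_num
            have hi1 : ((i : Fin n):ℤ) = (k:ℤ) - 1 := by rw [hiκ, hκZ]
            rw [hj1, hi1]
            ring
          rwa [hexp2] at hx2
        · have hsum : (∑ l, Matrix.single κ (col l) (x l) i j) = 0 := by
            refine Finset.sum_eq_zero fun l _ => ?_
            simp only [Matrix.single, Matrix.of_apply, ite_eq_right_iff, and_imp]
            intro _ hcl
            exfalso
            apply hjk
            have : ((col l : Fin n) : ℕ) = (j : ℕ) := by rw [hcl]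
            rw [hcolval] at this
            have := l.isLt
            omega
          rw [hsum, norm_zero]
          positivity
      · have hsum : (∑ l, Matrix.single κ (col l) (x l) i j) = 0 := by
          refine Finset.sum_eq_zero fun l _ => ?_
          simp only [Matrix.single, Matrix.of_apply, ite_eq_right_iff, and_imp]
          intro hκi _
          exact absurd hκi.symm hiκ
        rw [hsum, norm_zero]
        positivity

end
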